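/- Let u = 1^a 2^b 1 v with a, b ≥ 1 and v a word over {1,2}. Then every graph G is u-representable: there exists a labeling G = ([n], E) and a word w with letters exactly [n] such that for all distinct x, y in [n], xy ∈ E if and only if w_{{x,y}} has no u-match. -/

import Mathlib

/-- `red w` replaces each occurrence of the `i`-th smallest letter of `w` by `i`. -/
def red (w : List ℕ) : List ℕ :=
  w.map (fun x => (w.toFinset.filter (· < x)).card + 1)

/-- `w` has a `u`-match (starting at some position `i`): a factor of `w` of length `|u|`
whose reduction equals `red u` (which is `u` itself when `red u = u`). -/
def HasMatch (u w : List ℕ) : Prop :=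
  ∃ i, i + u.length ≤ w.length ∧ red ((w.drop i).take u.length) = red u

/-- The word `w` `u`-represents the labeled graph with vertex set `V` and adjacency `E`:
the letters occurring in `w` are exactly `V`, and two distinct vertices are adjacent
iff `w` restricted to these two letters has no `u`-match. -/
def Represents (u w : List ℕ) (V : Finset ℕ) (E : ℕ → ℕ → Prop) : Prop :=
  (∀ x, x ∈ w ↔ x ∈ V) ∧
  ∀ x ∈ V, ∀ y ∈ V, x ≠ y →
    (E x y ↔ ¬ HasMatch u (w.filter (fun z => z = x ∨ z = y)))

/-! ### Auxiliary lemmas -/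

def GoodBlocks (m : ℕ) (L : List (List ℕ)) : Prop :=
  ∀ blk ∈ L, blk = [] ∨ ∃ c k, m ≤ k ∧ blk = List.replicate k c

lemma flatten_first (m : ℕ) : ∀ (L : List (List ℕ)), GoodBlocks m L →
    ∀ q x c, q < m → L.flatten[q]? = some x → L.flatten[0]? = some c → x = c := by
  intro L
  induction L with
  | nil => intro _ q x c _ h _; simp at h
  | cons blk L ih =>
    intro hblk q x c hq hx hc
    rcases hblk blk (by simp) with h1 | ⟨d, k, hk, rfl⟩
    · subst h1
      exact ih (fun b hb => hblk b (by simp [hb])) q x c hq (by simpa using hx)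
        (by simpa using hc)
    · rw [List.flatten_cons, List.getElem?_append, List.getElem?_replicate] at hx hc
      simp only [List.length_replicate] at hx hc
      rw [if_pos (by omega), if_pos (by omega)] at hx
      rw [if_pos (by omega), if_pos (by omega)] at hc
      rw [Option.some_inj] at hx hc
      omega

lemma flatten_block (m : ℕ) : ∀ (L : List (List ℕ)), GoodBlocks m L →
    ∀ j b' x y z, b' + 2 ≤ m →
      L.flatten[j]? = some x → L.flatten[j+1]? = some y →
      L.flatten[j+b'+1]? = some z → x ≠ y → z = y := by
  intro L
  induction L with
  | nil => intro _ j b' x y z _ h; simp at h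
  | cons blk L ih =>
    intro hblk j b' x y z hb' hx hy hz hne
    rcases hblk blk (by simp) with h1 | ⟨d, k, hk, rfl⟩
    · subst h1
      exact ih (fun b hb => hblk b (by simp [hb])) j b' x y z hb' (by simpa using hx)
        (by simpa using hy) (by simpa using hz) hne
    · rw [List.flatten_cons, List.getElem?_append] at hx hy hz
      simp only [List.length_replicate] at hx hy hz
      by_cases h1 : j + 1 < k
      · exfalso
        rw [if_pos (by omega), List.getElem?_replicate, if_pos (by omega)] at hx
        rw [if_pos (by omega), List.getElem?_replicate, if_pos (by omega)] at hy
        rw [Option.some_inj] at hx hy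
        exact hne (by omega)
      · by_cases h2 : k ≤ j
        · rw [if_neg (by omega)] at hx hy hz
          have e1 : j + 1 - k = (j - k) + 1 := by omega
          have e2 : j + b' + 1 - k = (j - k) + b' + 1 := by omega
          rw [e1] at hy
          rw [e2] at hz
          exact ih (fun b hb => hblk b (by simp [hb])) (j - k) b' x y z hb' hx hy hz hne
        · have hjk : j + 1 = k := by omega
          rw [if_neg (by omega)] at hy hz
          have e1 : j + 1 - k = 0 := by omega
          have e2 : j + b' + 1 - k = b' := by omega
          rw [e1] at hy
          rw [e2] at hz
          exact flatten_first m L (fun b hb => hblk b (by simp [hb])) b' z y (by omega) hz hy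

lemma red_map (x y : ℕ) (hxy : x < y) (f : List ℕ) (hf : ∀ c ∈ f, c = x ∨ c = y)
    (hx : x ∈ f) (hy : y ∈ f) :
    red f = f.map (fun c => if c = x then 1 else 2) := by
  have hT : f.toFinset = {x, y} := by
    ext t
    simp only [List.mem_toFinset, Finset.mem_insert, Finset.mem_singleton]
    exact ⟨fun ht => hf t ht, fun ht => by rcases ht with rfl | rfl <;> assumption⟩
  unfold red
  apply List.map_congr_left
  intro c hc
  rw [hT]
  rcases hf c hc with rfl | rfl
  · have h0 : ({c, y} : Finset ℕ).filter (· < c) = ∅ := by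
      apply Finset.eq_empty_iff_forall_notMem.mpr
      intro t ht
      rw [Finset.mem_filter, Finset.mem_insert, Finset.mem_singleton] at ht
      rcases ht.1 with rfl | rfl
      · exact lt_irrefl _ ht.2
      · exact absurd ht.2 (not_lt_of_gt hxy)
    rw [h0, if_pos rfl]
    simp
  · have h0 : ({x, c} : Finset ℕ).filter (· < c) = {x} := by
      ext t
      rw [Finset.mem_filter, Finset.mem_insert, Finset.mem_singleton, Finset.mem_singleton]
      constructor
      · rintro ⟨rfl | rfl, h⟩
        · rfl
        · exact absurd h (lt_irrefl _)
      · rintro rfl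
        exact ⟨Or.inl rfl, hxy⟩
    rw [h0, if_neg (by omega)]
    simp

lemma red_self (u : List ℕ) (h1 : 1 ∈ u) (h2 : 2 ∈ u) (hu : ∀ c ∈ u, c = 1 ∨ c = 2) :
    red u = u := by
  rw [red_map 1 2 one_lt_two u hu h1 h2]
  conv_rhs => rw [← List.map_id u]
  apply List.map_congr_left
  intro c hc
  rcases hu c hc with rfl | rfl <;> simp

lemma red_sigma (x y : ℕ) (hxy : x < y) (u : List ℕ) (h1 : 1 ∈ u) (h2 : 2 ∈ u)
    (hu : ∀ c ∈ u, c = 1 ∨ c = 2) :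
    red (u.map (fun c => if c = 1 then x else y)) = u := by
  have hσ : ∀ c ∈ u.map (fun c => if c = 1 then x else y), c = x ∨ c = y := by
    intro c hc
    rw [List.mem_map] at hc
    obtain ⟨d, _, rfl⟩ := hc
    split <;> simp
  have hxm : x ∈ u.map (fun c => if c = 1 then x else y) :=
    List.mem_map.mpr ⟨1, h1, by simp⟩
  have hym : y ∈ u.map (fun c => if c = 1 then x else y) :=
    List.mem_map.mpr ⟨2, h2, by norm_num⟩
  rw [red_map x y hxy _ hσ hxm hym, List.map_map]
  conv_rhs => rw [← List.map_id u]
  apply List.map_congr_left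
  intro c hc
  rcases hu c hc with rfl | rfl <;> simp [hxy.ne']

lemma exists_desc (f u : List ℕ) (h2 : 2 ∈ u) (hredf : red f = u) :
    ∃ c ∈ f, ∃ d ∈ f, d < c := by
  rw [← hredf] at h2
  unfold red at h2
  rw [List.mem_map] at h2
  obtain ⟨c, hcf, hc⟩ := h2
  have hne : (f.toFinset.filter (· < c)).Nonempty := Finset.card_pos.mp (by omega)
  obtain ⟨d, hd⟩ := hne
  rw [Finset.mem_filter, List.mem_toFinset] at hd
  exact ⟨c, hcf, d, hd.1, hd.2⟩

lemma shape (x y : ℕ) (hxy : x < y) (f u : List ℕ)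
    (hf : ∀ c ∈ f, c = x ∨ c = y) (h2 : 2 ∈ u) (hredf : red f = u) :
    f = u.map (fun c => if c = 1 then x else y) := by
  by_cases hx : x ∈ f
  · by_cases hy : y ∈ f
    · have h := red_map x y hxy f hf hx hy
      rw [hredf] at h
      rw [h, List.map_map]
      conv_lhs => rw [← List.map_id f]
      apply List.map_congr_left
      intro c hc
      rcases hf c hc with rfl | rfl
      · simp
      · simp [hxy.ne']
    · exfalso
      obtain ⟨c, hcf, d, hdf, hdc⟩ := exists_desc f u h2 hredf
      rcases hf c hcf with rfl | rfl
      · rcases hf d hdf with rfl | rfl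
        · exact lt_irrefl _ hdc
        · exact hy hdf
      · exact hy hcf
  · exfalso
    obtain ⟨c, hcf, d, hdf, hdc⟩ := exists_desc f u h2 hredf
    rcases hf c hcf with rfl | rfl
    · exact hx hcf
    · rcases hf d hdf with rfl | rfl
      · exact hx hdf
      · exact lt_irrefl _ hdc

section UFacts

variable (a b : ℕ) (v : List ℕ)

lemma u_elts (hv : ∀ c ∈ v, c = 1 ∨ c = 2) :
    ∀ c ∈ List.replicate a 1 ++ List.replicate b 2 ++ 1 :: v, c = 1 ∨ c = 2 := by
  intro c hc
  rcases List.mem_append.mp hc with hc | hc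
  · rcases List.mem_append.mp hc with hc | hc
    · exact Or.inl (List.eq_of_mem_replicate hc)
    · exact Or.inr (List.eq_of_mem_replicate hc)
  · rcases List.mem_cons.mp hc with rfl | hc
    · exact Or.inl rfl
    · exact hv c hc

lemma u_len : (List.replicate a 1 ++ List.replicate b 2 ++ 1 :: v).length
    = a + b + 1 + v.length := by
  simp [List.length_append]
  omega

lemma u_mem1 (ha : 1 ≤ a) : (1:ℕ) ∈ List.replicate a 1 ++ List.replicate b 2 ++ 1 :: v := by
  refine List.mem_append.mpr (Or.inl (List.mem_append.mpr (Or.inl ?_)))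
  exact List.mem_replicate.mpr ⟨by omega, rfl⟩

lemma u_mem2 (hb : 1 ≤ b) : (2:ℕ) ∈ List.replicate a 1 ++ List.replicate b 2 ++ 1 :: v := by
  refine List.mem_append.mpr (Or.inl (List.mem_append.mpr (Or.inr ?_)))
  exact List.mem_replicate.mpr ⟨by omega, rfl⟩

lemma u_val1 (ha : 1 ≤ a) :
    (List.replicate a 1 ++ List.replicate b 2 ++ 1 :: v)[a-1]? = some 1 := by
  rw [List.getElem?_append, if_pos (by simp; omega), List.getElem?_append,
    if_pos (by simp; omega), List.getElem?_replicate, if_pos (by omega)]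

lemma u_val2 (hb : 1 ≤ b) :
    (List.replicate a 1 ++ List.replicate b 2 ++ 1 :: v)[a]? = some 2 := by
  rw [List.getElem?_append, if_pos (by simp; omega), List.getElem?_append,
    if_neg (by simp), List.getElem?_replicate]
  simp only [List.length_replicate, Nat.sub_self]
  rw [if_pos (by omega)]

lemma u_val3 :
    (List.replicate a 1 ++ List.replicate b 2 ++ 1 :: v)[a+b]? = some 1 := by
  rw [List.getElem?_append, if_neg (by simp)]
  simp

end UFacts

lemma no_match_blocks (a b : ℕ) (ha : 1 ≤ a) (hb : 1 ≤ b) (v : List ℕ)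
    (hv : ∀ c ∈ v, c = 1 ∨ c = 2) (x y : ℕ) (hxy : x < y)
    (Lf : List (List ℕ))
    (hgood : GoodBlocks (List.replicate a 1 ++ List.replicate b 2 ++ 1 :: v).length Lf)
    (helts : ∀ c ∈ Lf.flatten, c = x ∨ c = y) :
    ¬ HasMatch (List.replicate a 1 ++ List.replicate b 2 ++ 1 :: v) Lf.flatten := by
  set u := List.replicate a 1 ++ List.replicate b 2 ++ 1 :: v with hu
  rintro ⟨i, hile, hredf⟩
  set W := Lf.flatten with hW
  have hm : u.length = a + b + 1 + v.length := u_len a b v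
  have hredu : red u = u := red_self u (u_mem1 a b v ha) (u_mem2 a b v hb) (u_elts a b v hv)
  rw [hredu] at hredf
  have hfelts : ∀ c ∈ (W.drop i).take u.length, c = x ∨ c = y := by
    intro c hc
    exact helts c (List.drop_subset i W (List.take_subset _ _ hc))
  have hfeq : (W.drop i).take u.length = u.map (fun c => if c = 1 then x else y) :=
    shape x y hxy _ u hfelts (u_mem2 a b v hb) hredf
  have key : ∀ j, j < u.length →
      W[i+j]? = (u[j]?).map (fun c => if c = 1 then x else y) := by
    intro j hj
    calc W[i+j]? = (W.drop i)[j]? := List.getElem?_drop.symm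
      _ = ((W.drop i).take u.length)[j]? := by
          rw [List.getElem?_take, if_pos hj]
      _ = (u.map (fun c => if c = 1 then x else y))[j]? := by rw [hfeq]
      _ = (u[j]?).map (fun c => if c = 1 then x else y) := List.getElem?_map
  have k1 : W[i+a-1]? = some x := by
    have e : i + a - 1 = i + (a-1) := by omega
    rw [e, key (a-1) (by omega), u_val1 a b v ha]
    simp
  have k2 : W[(i+a-1)+1]? = some y := by
    have e : (i+a-1)+1 = i + a := by omega
    rw [e, key a (by omega), u_val2 a b v hb]
    norm_num
  have k3 : W[(i+a-1)+b+1]? = some x := by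
    have e : (i+a-1)+b+1 = i + (a+b) := by omega
    rw [e, key (a+b) (by omega), u_val3 a b v]
    simp
  have := flatten_block u.length Lf hgood (i+a-1) b x y x (by omega) k1 k2 k3 (by omega)
  omega

lemma match_of_infix (u σw : List ℕ) (P : ℕ → Bool) (w : List ℕ) (hinf : σw <:+: w)
    (hfilt : σw.filter P = σw) (hred : red σw = red u) (hlen : σw.length = u.length) :
    HasMatch u (w.filter P) := by
  obtain ⟨s, t, rfl⟩ := hinf
  refine ⟨(s.filter P).length, ?_, ?_⟩
  · rw [List.filter_append, List.filter_append, hfilt]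
    simp only [List.length_append]
    omega
  · rw [List.filter_append, List.filter_append, hfilt, ← hlen, List.append_assoc]
    rw [List.drop_left, List.take_left]
    exact hred

lemma filter_pair (P : ℕ → Bool) (p q : ℕ) (hp : P p = true) (hq : P q = false) :
    ∀ l : List ℕ, (∀ c ∈ l, c = p ∨ c = q) → ∃ k, l.filter P = List.replicate k p := by
  intro l
  induction l with
  | nil => exact fun _ => ⟨0, rfl⟩
  | cons c l ih =>
    intro hl
    obtain ⟨k, hk⟩ := ih (fun d hd => hl d (List.mem_cons_of_mem _ hd))
    rcases hl c List.mem_cons_self with rfl | rfl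
    · exact ⟨k + 1, by rw [List.filter_cons_of_pos hp, hk]; rfl⟩
    · exact ⟨k, by rw [List.filter_cons_of_neg (by simp [hq]), hk]⟩

lemma aux_represent (a b : ℕ) (ha : 1 ≤ a) (hb : 1 ≤ b) (v : List ℕ)
    (hv : ∀ x ∈ v, x = 1 ∨ x = 2) (n : ℕ) (A : ℕ → ℕ → Prop)
    (hsym : ∀ x y, A x y → A y x) :
    ∃ w, Represents (List.replicate a 1 ++ List.replicate b 2 ++ 1 :: v) w
      (Finset.Icc 1 n) A := by
  classical
  set u := List.replicate a 1 ++ List.replicate b 2 ++ 1 :: v with hu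
  have hm : u.length = a + b + 1 + v.length := u_len a b v
  have hm' : (List.replicate a 1 ++ List.replicate b 2 ++ 1 :: v).length = u.length := by
    rw [← hu]
  have hu_elts : ∀ c ∈ u, c = 1 ∨ c = 2 := u_elts a b v hv
  have h1u : (1:ℕ) ∈ u := u_mem1 a b v ha
  have h2u : (2:ℕ) ∈ u := u_mem2 a b v hb
  set gad : ℕ → ℕ → List ℕ := fun p q =>
    List.replicate u.length p ++ u.map (fun c => if c = 1 then p else q) ++
      List.replicate u.length q with hgad
  set pairs : List (ℕ × ℕ) := (List.range (n+1) ×ˢ List.range (n+1)).filter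
    (fun pq => decide (1 ≤ pq.1 ∧ pq.1 < pq.2 ∧ pq.2 ≤ n ∧ ¬ A pq.1 pq.2)) with hpairs
  set segs : List (List ℕ) := pairs.map (fun pq => gad pq.1 pq.2) ++
    (List.range n).map (fun i => List.replicate u.length (i+1)) with hsegs
  have hpairs_mem : ∀ p q : ℕ, (p, q) ∈ pairs ↔
      (1 ≤ p ∧ p < q ∧ q ≤ n ∧ ¬ A p q) := by
    intro p q
    rw [hpairs, List.mem_filter, List.mem_product, List.mem_range, List.mem_range,
      decide_eq_true_iff]
    constructor
    · exact fun h => h.2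
    · intro h
      exact ⟨⟨by omega, by omega⟩, h⟩
  refine ⟨segs.flatten, ?_, ?_⟩
  · -- membership
    intro t
    rw [Finset.mem_Icc, List.mem_flatten]
    constructor
    · rintro ⟨l, hl, htl⟩
      rcases List.mem_append.mp hl with hl | hl
      · rw [List.mem_map] at hl
        obtain ⟨⟨p, q⟩, hpq, rfl⟩ := hl
        obtain ⟨hp1, hplt, hqn, -⟩ := (hpairs_mem p q).mp hpq
        rw [hgad] at htl
        rcases List.mem_append.mp htl with htl | htl
        · rcases List.mem_append.mp htl with htl | htl
          · have := List.eq_of_mem_replicate htl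
            omega
          · rw [List.mem_map] at htl
            obtain ⟨c, -, rfl⟩ := htl
            split <;> omega
        · have := List.eq_of_mem_replicate htl
          omega
      · rw [List.mem_map] at hl
        obtain ⟨i, hi, rfl⟩ := hl
        rw [List.mem_range] at hi
        have := List.eq_of_mem_replicate htl
        omega
    · rintro ⟨ht1, htn⟩
      refine ⟨List.replicate u.length t, ?_, ?_⟩
      · refine List.mem_append.mpr (Or.inr ?_)
        rw [List.mem_map]
        refine ⟨t - 1, List.mem_range.mpr (by omega), ?_⟩
        congr 1
        omega
      · exact List.mem_replicate.mpr ⟨by omega, rfl⟩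
  · -- adjacency condition
    intro x hx y hy hxyne
    rw [Finset.mem_Icc] at hx hy
    have core : ∀ x y : ℕ, 1 ≤ x → y ≤ n → x < y →
        (A x y ↔ ¬ HasMatch u (segs.flatten.filter (fun z => decide (z = x ∨ z = y)))) := by
      intro x y hx1 hyn hxy
      set P : ℕ → Bool := fun z => decide (z = x ∨ z = y) with hP
      have hPiff : ∀ z, P z = true ↔ (z = x ∨ z = y) := by
        intro z
        rw [hP, decide_eq_true_iff]
      constructor
      · -- adjacent: no match
        intro hAxy
        rw [List.filter_flatten]
        apply no_match_blocks a b ha hb v hv x y hxy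
        · -- good blocks
          intro blk hblk
          rw [List.mem_map] at hblk
          obtain ⟨seg, hseg, rfl⟩ := hblk
          rcases List.mem_append.mp hseg with hseg | hseg
          · rw [List.mem_map] at hseg
            obtain ⟨⟨p, q⟩, hpq, rfl⟩ := hseg
            obtain ⟨hp1, hplt, hqn, hnA⟩ := (hpairs_mem p q).mp hpq
            have hgelts : ∀ c ∈ u.map (fun c => if c = 1 then p else q), c = p ∨ c = q := by
              intro c hc
              rw [List.mem_map] at hc
              obtain ⟨d, -, rfl⟩ := hc
              split <;> simp
            have hblkeq : List.filter P (gad (p, q).1 (p, q).2) =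
                List.filter P (List.replicate u.length p) ++
                List.filter P (u.map (fun c => if c = 1 then p else q)) ++
                List.filter P (List.replicate u.length q) := by
              simp only [hgad, List.filter_append]
            rw [hblkeq]
            by_cases hPp : p = x ∨ p = y <;> by_cases hPq : q = x ∨ q = y
            · exfalso
              rcases hPp with rfl | rfl <;> rcases hPq with rfl | rfl
              · omega
              · exact hnA hAxy
              · omega
              · omega
            · have hfp : P p = true := (hPiff p).mpr hPp
              have hfq : P q = false := by
                rw [hP]
                simpa using hPq
              obtain ⟨k, hk⟩ := filter_pair P p q hfp hfq _ hgelts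
              have h3 : List.filter P (List.replicate u.length p) =
                  List.replicate u.length p :=
                List.filter_eq_self.mpr (fun c hc => by
                  rw [List.eq_of_mem_replicate hc]; exact hfp)
              have h4 : List.filter P (List.replicate u.length q) = [] :=
                List.filter_eq_nil_iff.mpr (fun c hc => by
                  rw [List.eq_of_mem_replicate hc, hfq]; simp)
              right
              refine ⟨p, u.length + k, by omega, ?_⟩
              rw [h3, hk, h4, List.append_nil, ← List.replicate_add]
            · have hfq : P q = true := (hPiff q).mpr hPq
              have hfp : P p = false := by
                rw [hP]
                simpa using hPp
              have hgelts' : ∀ c ∈ u.map (fun c => if c = 1 then p else q), c = q ∨ c = p :=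
                fun c hc => (hgelts c hc).symm
              obtain ⟨k, hk⟩ := filter_pair P q p hfq hfp _ hgelts'
              have h3 : List.filter P (List.replicate u.length p) = [] :=
                List.filter_eq_nil_iff.mpr (fun c hc => by
                  rw [List.eq_of_mem_replicate hc, hfp]; simp)
              have h4 : List.filter P (List.replicate u.length q) =
                  List.replicate u.length q :=
                List.filter_eq_self.mpr (fun c hc => by
                  rw [List.eq_of_mem_replicate hc]; exact hfq)
              right
              refine ⟨q, k + u.length, by omega, ?_⟩
              rw [h3, hk, h4, List.nil_append, ← List.replicate_add]
            · have hfp : P p = false := by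
                rw [hP]
                simpa using hPp
              have hfq : P q = false := by
                rw [hP]
                simpa using hPq
              have h3 : List.filter P (List.replicate u.length p) = [] :=
                List.filter_eq_nil_iff.mpr (fun c hc => by
                  rw [List.eq_of_mem_replicate hc, hfp]; simp)
              have h4 : List.filter P (List.replicate u.length q) = [] :=
                List.filter_eq_nil_iff.mpr (fun c hc => by
                  rw [List.eq_of_mem_replicate hc, hfq]; simp)
              have h5 : List.filter P (u.map (fun c => if c = 1 then p else q)) = [] :=
                List.filter_eq_nil_iff.mpr (fun c hc => by
                  rcases hgelts c hc with rfl | rfl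
                  · rw [hfp]; simp
                  · rw [hfq]; simp)
              left
              rw [h3, h4, h5]
              simp
          · rw [List.mem_map] at hseg
            obtain ⟨i, -, rfl⟩ := hseg
            by_cases hPi : (i+1) = x ∨ (i+1) = y
            · right
              refine ⟨i+1, u.length, le_refl _, ?_⟩
              rw [List.filter_eq_self.mpr (fun c hc => by
                rw [List.eq_of_mem_replicate hc]; exact (hPiff _).mpr hPi)]
            · left
              rw [List.filter_eq_nil_iff.mpr (fun c hc => by
                rw [List.eq_of_mem_replicate hc]
                simp only [hP]
                simpa using hPi)]
        · -- letters of the filtered word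
          intro c hc
          rw [← List.filter_flatten] at hc
          have := (List.mem_filter.mp hc).2
          exact (hPiff c).mp this
      · -- no match implies adjacent
        intro hnm
        by_contra hnA
        apply hnm
        have hpq : (x, y) ∈ pairs := (hpairs_mem x y).mpr ⟨hx1, hxy, hyn, hnA⟩
        have hmem : gad x y ∈ segs := by
          refine List.mem_append.mpr (Or.inl ?_)
          rw [List.mem_map]
          exact ⟨(x, y), hpq, rfl⟩
        have hinf : u.map (fun c => if c = 1 then x else y) <:+: segs.flatten := by
          refine List.IsInfix.trans ?_ (List.infix_of_mem_flatten hmem)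
          exact ⟨List.replicate u.length x, List.replicate u.length y, rfl⟩
        apply match_of_infix u _ P _ hinf
        · apply List.filter_eq_self.mpr
          intro c hc
          rw [List.mem_map] at hc
          obtain ⟨d, -, rfl⟩ := hc
          apply (hPiff _).mpr
          split
          · exact Or.inl rfl
          · exact Or.inr rfl
        · rw [red_sigma x y hxy u h1u h2u hu_elts, red_self u h1u h2u hu_elts]
        · exact List.length_map _
    rcases lt_trichotomy x y with hlt | heq | hgt
    · exact core x y (by omega) (by omega) hlt
    · exact absurd heq hxyne
    · have hfil : segs.flatten.filter (fun z => decide (z = x ∨ z = y)) =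
          segs.flatten.filter (fun z => decide (z = y ∨ z = x)) :=
        List.filter_congr (fun c _ => decide_eq_decide.mpr or_comm)
      constructor
      · intro hAxy
        rw [hfil]
        exact (core y x (by omega) (by omega) hgt).mp (hsym x y hAxy)
      · intro hnm
        rw [hfil] at hnm
        exact hsym y x ((core y x (by omega) (by omega) hgt).mpr hnm)

/-- for `u = 1^a 2^b 1 v` with `a, b ≥ 1` and `v` over `{1,2}`, every
graph is `u`-representable: there exist a labeling of the vertices by `[n]` and a
representing word. -/
theorem every_graph_121_representable (a b : ℕ) (ha : 1 ≤ a) (hb : 1 ≤ b)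
    (v : List ℕ) (hv : ∀ x ∈ v, x = 1 ∨ x = 2)
    (V : Type) [Fintype V] [DecidableEq V] (G : SimpleGraph V) :
    ∃ (φ : V ≃ Fin (Fintype.card V)) (w : List ℕ),
      Represents (List.replicate a 1 ++ List.replicate b 2 ++ 1 :: v)
        w (Finset.Icc 1 (Fintype.card V))
        (fun x y => ∃ p q : V, G.Adj p q ∧ x = (φ p : ℕ) + 1 ∧ y = (φ q : ℕ) + 1) := by
  refine ⟨Fintype.equivFin V, ?_⟩
  exact aux_represent a b ha hb v hv (Fintype.card V) _
    (fun x y ⟨p, q, hadj, hxp, hyq⟩ => ⟨q, p, hadj.symm, hyq, hxp⟩)
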